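/- Let (M_k), (S_k) with S_k = Σ_{i=0}^k M_i, let 0 < λ < 1, and let (η_k) satisfy, for all k ≥ 1, η_k ≤ (a·(ω(λ^k) + μ^k))·S_k + b·(ω(λ^k) + μ^k + ν·λ^k) for constants a, b, ν ≥ 0, 0 < μ < 1, and a non-decreasing ω with Σ_k ω(λ^k) < ∞. If additionally M_{k+1} ≤ (1/4)M_k + η_k for k ≥ k₀, where k₀ is chosen so that Σ_{i=k₀}^∞ a·(ω(λ^i) + μ^i) ≤ 1/4, then the sequence (S_k) is bounded, and hence Σ_{k=0}^∞ M_k converges. -/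

import Mathlib

/-- Abstract convergence argument of Step 2: if `η_k` is controlled by Dini-type terms times
the partial sums `S_k`, `M_{k+1} ≤ M_k/4 + η_k` for `k ≥ k₀`, and the tail sum of the
Dini coefficients beyond `k₀` is at most `1/4`, then the partial sums `(S_k)` are bounded
and `Σ M_k` converges. -/
theorem step2_convergence (M η : ℕ → ℝ) (ω : ℝ → ℝ) (lam μ a b ν : ℝ) (k₀ : ℕ)
    (hM : ∀ k, 0 ≤ M k) (hη : ∀ k, 0 ≤ η k)
    (hlam0 : 0 < lam) (hlam1 : lam < 1) (hμ0 : 0 < μ) (hμ1 : μ < 1)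
    (ha : 0 ≤ a) (hb : 0 ≤ b) (hν : 0 ≤ ν)
    (hωmono : ∀ r s, 0 < r → r ≤ s → s ≤ 1 → ω r ≤ ω s)
    (hωnonneg : ∀ r, 0 < r → r ≤ 1 → 0 ≤ ω r)
    (hωsum : Summable (fun k : ℕ => ω (lam ^ k)))
    (hηbound : ∀ k, 1 ≤ k →
      η k ≤ a * (ω (lam ^ k) + μ ^ k) * (∑ i ∈ Finset.range (k + 1), M i) +
            b * (ω (lam ^ k) + μ ^ k + ν * lam ^ k))
    (hk₀ : 1 ≤ k₀)
    (htail : (∑' i : ℕ, a * (ω (lam ^ (k₀ + i)) + μ ^ (k₀ + i))) ≤ 1 / 4)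
    (hrec : ∀ k, k₀ ≤ k → M (k + 1) ≤ (1 / 4) * M k + η k) :
    (∃ C : ℝ, ∀ k, (∑ i ∈ Finset.range (k + 1), M i) ≤ C) ∧ Summable M := by
  set S : ℕ → ℝ := fun n => ∑ i ∈ Finset.range (n + 1), M i with hSdef
  have hS0 : ∀ n, 0 ≤ S n := fun n => Finset.sum_nonneg fun i _ => hM i
  have hSmono : Monotone S := by
    intro m n hmn
    exact Finset.sum_le_sum_of_subset_of_nonneg
      (Finset.range_subset_range.mpr (by omega)) (fun i _ _ => hM i)
  have hωk : ∀ k : ℕ, 0 ≤ ω (lam ^ k) := fun k =>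
    hωnonneg _ (pow_pos hlam0 k) (pow_le_one₀ hlam0.le hlam1.le)
  set c : ℕ → ℝ := fun k => a * (ω (lam ^ k) + μ ^ k) with hcdef
  set d : ℕ → ℝ := fun k => b * (ω (lam ^ k) + μ ^ k + ν * lam ^ k) with hddef
  have hc0 : ∀ k, 0 ≤ c k := fun k =>
    mul_nonneg ha (add_nonneg (hωk k) (pow_nonneg hμ0.le k))
  have hd0 : ∀ k, 0 ≤ d k := fun k =>
    mul_nonneg hb (add_nonneg (add_nonneg (hωk k) (pow_nonneg hμ0.le k))
      (mul_nonneg hν (pow_nonneg hlam0.le k)))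
  have hgμ : Summable (fun k : ℕ => μ ^ k) := summable_geometric_of_lt_one hμ0.le hμ1
  have hglam : Summable (fun k : ℕ => lam ^ k) := summable_geometric_of_lt_one hlam0.le hlam1
  have hcsum : Summable c := (hωsum.add hgμ).mul_left a
  have hdsum : Summable d := ((hωsum.add hgμ).add (hglam.mul_left ν)).mul_left b
  set D : ℝ := ∑' k, d k with hDdef
  have hD0 : 0 ≤ D := tsum_nonneg hd0
  have hcshift : Summable (fun i : ℕ => c (k₀ + i)) :=
    hcsum.comp_injective (add_right_injective k₀)
  -- key bound
  have key : ∀ n, k₀ ≤ n → S (n + 1) ≤ 2 * (S k₀ + D) := by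
    intro n hn
    have hsplit : S (n + 1) = S k₀ + ∑ k ∈ Finset.Ico k₀ (n + 1), M (k + 1) := by
      have h1 : ∑ k ∈ Finset.Ico k₀ (n + 1), M (k + 1)
          = ∑ k ∈ Finset.Ico (k₀ + 1) (n + 2), M k := by
        rw [Finset.sum_Ico_eq_sum_range, Finset.sum_Ico_eq_sum_range]
        have : n + 2 - (k₀ + 1) = n + 1 - k₀ := by omega
        rw [this]
        exact Finset.sum_congr rfl (fun i _ => by congr 1; omega)
      have h2 : S k₀ + ∑ k ∈ Finset.Ico (k₀ + 1) (n + 2), M k = S (n + 1) := by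
        simp only [hSdef, Finset.range_eq_Ico]
        exact Finset.sum_Ico_consecutive _ (by omega) (by omega)
      rw [h1, ← h2]
    have step : ∀ k ∈ Finset.Ico k₀ (n + 1),
        M (k + 1) ≤ (1 / 4) * M k + c k * S k + d k := by
      intro k hk
      rw [Finset.mem_Ico] at hk
      have h1 := hrec k hk.1
      have h2 := hηbound k (le_trans hk₀ hk.1)
      have : η k ≤ c k * S k + d k := h2
      linarith
    have hsum1 : ∑ k ∈ Finset.Ico k₀ (n + 1), M (k + 1)
        ≤ ∑ k ∈ Finset.Ico k₀ (n + 1), ((1 / 4) * M k + c k * S k + d k) :=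
      Finset.sum_le_sum step
    have hA : ∑ k ∈ Finset.Ico k₀ (n + 1), (1 / 4) * M k ≤ (1 / 4) * S (n + 1) := by
      rw [← Finset.mul_sum]
      have : ∑ k ∈ Finset.Ico k₀ (n + 1), M k ≤ S (n + 1) := by
        apply Finset.sum_le_sum_of_subset_of_nonneg _ (fun i _ _ => hM i)
        rw [Finset.range_eq_Ico]
        exact Finset.Ico_subset_Ico (by omega) (by omega)
      linarith
    have hB : ∑ k ∈ Finset.Ico k₀ (n + 1), c k * S k ≤ (1 / 4) * S (n + 1) := by
      have hb1 : ∑ k ∈ Finset.Ico k₀ (n + 1), c k * S k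
          ≤ ∑ k ∈ Finset.Ico k₀ (n + 1), c k * S (n + 1) := by
        apply Finset.sum_le_sum
        intro k hk
        rw [Finset.mem_Ico] at hk
        exact mul_le_mul_of_nonneg_left (hSmono (by omega)) (hc0 k)
      have hb2 : ∑ k ∈ Finset.Ico k₀ (n + 1), c k ≤ 1 / 4 := by
        have e : ∑ k ∈ Finset.Ico k₀ (n + 1), c k
            = ∑ i ∈ Finset.range (n + 1 - k₀), c (k₀ + i) := by
          rw [Finset.sum_Ico_eq_sum_range]
        rw [e]
        calc ∑ i ∈ Finset.range (n + 1 - k₀), c (k₀ + i)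
            ≤ ∑' i : ℕ, c (k₀ + i) := Summable.sum_le_tsum _ (fun i _ => hc0 _) hcshift
          _ ≤ 1 / 4 := htail
      calc ∑ k ∈ Finset.Ico k₀ (n + 1), c k * S k
          ≤ ∑ k ∈ Finset.Ico k₀ (n + 1), c k * S (n + 1) := hb1
        _ = (∑ k ∈ Finset.Ico k₀ (n + 1), c k) * S (n + 1) := by
            rw [Finset.sum_mul]
        _ ≤ (1 / 4) * S (n + 1) :=
            mul_le_mul_of_nonneg_right hb2 (hS0 _)
    have hC : ∑ k ∈ Finset.Ico k₀ (n + 1), d k ≤ D :=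
      Summable.sum_le_tsum _ (fun i _ => hd0 i) hdsum
    rw [Finset.sum_add_distrib, Finset.sum_add_distrib] at hsum1
    have : S (n + 1) ≤ S k₀ + ((1 / 4) * S (n + 1) + (1 / 4) * S (n + 1) + D) := by
      rw [hsplit]; linarith
    linarith
  refine ⟨⟨2 * (S k₀ + D), ?_⟩, ?_⟩
  · intro k
    rcases le_or_gt k k₀ with h | h
    · calc S k ≤ S k₀ := hSmono h
        _ ≤ 2 * (S k₀ + D) := by have := hS0 k₀; linarith
    · obtain ⟨n, rfl⟩ : ∃ n, k = n + 1 := ⟨k - 1, by omega⟩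
      exact key n (by omega)
  · apply summable_of_sum_range_le hM
    intro n
    calc ∑ i ∈ Finset.range n, M i ≤ S n := by
          apply Finset.sum_le_sum_of_subset_of_nonneg
            (Finset.range_subset_range.mpr (by omega)) (fun i _ _ => hM i)
      _ ≤ 2 * (S k₀ + D) := by
          rcases le_or_gt n k₀ with h | h
          · calc S n ≤ S k₀ := hSmono h
              _ ≤ 2 * (S k₀ + D) := by have := hS0 k₀; linarith
          · obtain ⟨m, rfl⟩ : ∃ m, n = m + 1 := ⟨n - 1, by omega⟩
            exact key m (by omega)
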